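/- arXiv:2007.03485 — 2 statements merged into one kernel-verified Lean document; each statement's English description precedes it below -/
import Mathlib

section
/- Let T ⊂ ℝ³ be a bounded open set of diameter h_T, star-shaped with respect to an interior point x_T, and let c be a vector-valued polynomial on T. If p := (x − x_T) × curl c on T, then ‖curl c‖_{L²(T)} ≤ 2 ‖curl p‖_{L²(T)}. -/
open MeasureTheory
open scoped RealInnerProductSpace
open MvPolynomial

noncomputable section

abbrev E3 := EuclideanSpace ℝ (Fin 3)

/-- `i`-th partial derivative. -/
def pd (i : Fin 3) (f : E3 → ℝ) (x : E3) : ℝ := fderiv ℝ f x (EuclideanSpace.single i 1)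

/-- Gradient. -/
def vgrad (f : E3 → ℝ) (x : E3) : E3 := (WithLp.equiv 2 (Fin 3 → ℝ)).symm fun i => pd i f x

/-- Divergence. -/
def vdiv (f : E3 → E3) (x : E3) : ℝ := ∑ i, pd i (fun y => f y i) x

/-- Curl. -/
def vcurl (f : E3 → E3) (x : E3) : E3 := (WithLp.equiv 2 (Fin 3 → ℝ)).symm
  ![pd 1 (fun y => f y 2) x - pd 2 (fun y => f y 1) x,
    pd 2 (fun y => f y 0) x - pd 0 (fun y => f y 2) x,
    pd 0 (fun y => f y 1) x - pd 1 (fun y => f y 0) x]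

/-- Cross product in ℝ³. -/
def cross3 (a b : E3) : E3 := (WithLp.equiv 2 (Fin 3 → ℝ)).symm
  ![a 1 * b 2 - a 2 * b 1, a 2 * b 0 - a 0 * b 2, a 0 * b 1 - a 1 * b 0]

/-- Convective derivative `(A·∇)B`. -/
def dirDeriv (A B : E3 → E3) (x : E3) : E3 := (WithLp.equiv 2 (Fin 3 → ℝ)).symm
  fun i => ∑ j, A x j * pd j (fun y => B y i) x

/-- Scalar polynomial of total degree ≤ q. -/
def PolyS (q : ℕ) (f : E3 → ℝ) : Prop :=
  ∃ P : MvPolynomial (Fin 3) ℝ, P.totalDegree ≤ q ∧ ∀ x : E3, f x = MvPolynomial.eval (fun i => x i) P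

/-- Vector polynomial of total degree ≤ q (componentwise). -/
def PolyV (q : ℕ) (f : E3 → E3) : Prop := ∀ i : Fin 3, PolyS q (fun x => f x i)

def Pfun (P : MvPolynomial (Fin 3) ℝ) : E3 → ℝ := fun x => MvPolynomial.eval (fun i => x i) P

def Pder (P : MvPolynomial (Fin 3) ℝ) (x : E3) : E3 →L[ℝ] ℝ :=
  ∑ j : Fin 3, Pfun (MvPolynomial.pderiv j P) x • EuclideanSpace.proj (𝕜 := ℝ) j

lemma Pder_apply (P : MvPolynomial (Fin 3) ℝ) (x v : E3) :
    Pder P x v = ∑ j : Fin 3, Pfun (pderiv j P) x * v j := by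
  simp [Pder]

lemma hasFDerivAt_Pfun (P : MvPolynomial (Fin 3) ℝ) (x : E3) :
    HasFDerivAt (Pfun P) (Pder P x) x := by
  induction P using MvPolynomial.induction_on with
  | C a =>
      have h1 : Pfun (C a) = fun _ => a := by funext y; simp [Pfun]
      have h2 : Pder (C a) x = 0 := by
        ext v; simp [Pder_apply, pderiv_C, Pfun]
      rw [h1, h2]; exact hasFDerivAt_const a x
  | add p q hp hq =>
      have h1 : Pfun (p + q) = fun y => Pfun p y + Pfun q y := by funext y; simp [Pfun]
      have h2 : Pder (p + q) x = Pder p x + Pder q x := by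
        ext v; simp [Pder_apply, Finset.sum_add_distrib, add_mul, Pfun]
      rw [h1, h2]; exact hp.add hq
  | mul_X p i hp =>
      have hXi : HasFDerivAt (fun y : E3 => y i) (EuclideanSpace.proj (𝕜 := ℝ) i) x :=
        (EuclideanSpace.proj (𝕜 := ℝ) i).hasFDerivAt
      have h1 : Pfun (p * X i) = fun y => Pfun p y * y i := by funext y; simp [Pfun]
      have h := hp.mul hXi
      have h2 : Pder (p * X i) x = Pfun p x • EuclideanSpace.proj (𝕜 := ℝ) i + x i • Pder p x := by
        ext v
        simp only [Pder_apply, ContinuousLinearMap.add_apply, ContinuousLinearMap.smul_apply,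
          smul_eq_mul, PiLp.proj_apply]
        have : ∀ j : Fin 3, Pfun (pderiv j (p * X i)) x * v j
            = Pfun (pderiv j p) x * x i * v j + (if j = i then Pfun p x * v i else 0) := by
          intro j
          rcases eq_or_ne j i with rfl | hne
          · simp [pderiv_mul, Pfun, mul_comm, mul_assoc, mul_left_comm]
            ring
          · simp [pderiv_mul, hne, Pfun]; exact Or.inl (mul_comm _ _)
        rw [Finset.sum_congr rfl (fun j _ => this j)]
        rw [Finset.sum_add_distrib]
        simp only [Finset.sum_ite_eq', Finset.mem_univ, if_true, Pder_apply, Finset.mul_sum]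
        rw [add_comm]
        congr 1
        exact Finset.sum_congr rfl (fun j _ => by ring)
      rw [h1, h2]
      exact h

lemma pd_Pfun (i : Fin 3) (P : MvPolynomial (Fin 3) ℝ) (x : E3) :
    pd i (Pfun P) x = Pfun (pderiv i P) x := by
  rw [pd, (hasFDerivAt_Pfun P x).fderiv, Pder_apply]
  simp [EuclideanSpace.single_apply]

lemma continuous_Pfun (P : MvPolynomial (Fin 3) ℝ) : Continuous (Pfun P) :=
  continuous_iff_continuousAt.2 fun x => (hasFDerivAt_Pfun P x).continuousAt

lemma pderiv_comm' (i j : Fin 3) (P : MvPolynomial (Fin 3) ℝ) :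
    pderiv i (pderiv j P) = pderiv j (pderiv i P) := by
  induction P using MvPolynomial.induction_on with
  | C a => simp
  | add p q hp hq => simp [hp, hq]
  | mul_X p k hp =>
      simp only [pderiv_mul, pderiv_X, map_add, hp]
      rcases eq_or_ne i k with rfl | hik
      · rcases eq_or_ne j i with rfl | hji <;> simp [Pi.single_apply, *]
      · rcases eq_or_ne j k with rfl | hjk <;> simp [Pi.single_apply, *]

lemma hasDerivAt_Pfun_line (P : MvPolynomial (Fin 3) ℝ) (b v : E3) (t : ℝ) :
    HasDerivAt (fun s : ℝ => Pfun P (b + s • v)) (Pder P (b + t • v) v) t := by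
  have hline : HasDerivAt (fun s : ℝ => b + s • v) v t := by
    simpa using ((hasDerivAt_id t).smul_const v).const_add b
  exact (hasFDerivAt_Pfun P (b + t • v)).comp_hasDerivAt t hline

lemma integrableOn_of_continuous {f : E3 → ℝ} (hf : Continuous f) {T : Set E3}
    (hb : Bornology.IsBounded T) : IntegrableOn f T volume := by
  have h : IntegrableOn f (closure T) volume :=
    (hf.continuousOn : ContinuousOn f (closure T)).integrableOn_compact hb.isCompact_closure
  exact h.mono_set subset_closure

lemma deriv_nonneg_of_le_one {h : ℝ → ℝ} {d : ℝ} (hd : HasDerivAt h d 1)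
    (hle : ∀ t ∈ Set.Ioo (0:ℝ) 1, h t ≤ h 1) : 0 ≤ d := by
  have hs : Filter.Tendsto (slope h 1) (nhdsWithin 1 (Set.Iio 1)) (nhds d) :=
    ((hasDerivAt_iff_tendsto_slope).1 hd).mono_left
      (nhdsWithin_mono 1 (fun t ht => ne_of_lt ht))
  refine ge_of_tendsto hs ?_
  filter_upwards [Ioo_mem_nhdsLT_of_mem (by constructor <;> norm_num : (1:ℝ) ∈ Set.Ioc 0 1)]
    with t ht
  have h1 : h t - h 1 ≤ 0 := sub_nonpos.2 (hle t ht)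
  have h2 : t - 1 < 0 := sub_neg.2 ht.2
  rw [slope_def_field]
  have := div_nonneg (neg_nonneg.2 h1) (neg_nonneg.2 h2.le)
  rwa [neg_div_neg_eq] at this

lemma measure_T_lt_top {T : Set E3} (hb : Bornology.IsBounded T) : volume T < ⊤ :=
  hb.measure_lt_top

lemma dilation_ineq (T : Set E3) (hopen : IsOpen T) (hbdd : Bornology.IsBounded T)
    (xT : E3) (hstar : StarConvex ℝ xT T) (Fp : MvPolynomial (Fin 3) ℝ)
    (hnn : ∀ x, 0 ≤ Pfun Fp x) :
    -3 * ∫ x in T, Pfun Fp x ≤ ∫ x in T, Pder Fp x (x - xT) := by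
  have hTm : MeasurableSet T := hopen.measurableSet
  have hint : IntegrableOn (Pfun Fp) T volume :=
    integrableOn_of_continuous (continuous_Pfun Fp) hbdd
  set φ : ℝ → ℝ := fun t => ∫ x in T, Pfun Fp (xT + t • (x - xT)) with hφ
  have hφ1 : φ 1 = ∫ x in T, Pfun Fp x := by
    simp [hφ]
  -- step (a) : for t ∈ (0,1), t^3 * φ t ≤ φ 1
  have hstep1 : ∀ t ∈ Set.Ioo (0:ℝ) 1, t ^ 3 * φ t ≤ φ 1 := by
    intro t ht
    set L : E3 → E3 := fun y => xT + t • (y - xT) with hL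
    have hDL : ∀ y ∈ T, HasFDerivWithinAt L (t • ContinuousLinearMap.id ℝ E3) T y := by
      intro y _
      have : HasFDerivAt L (t • ContinuousLinearMap.id ℝ E3) y := by
        simpa [hL] using (((hasFDerivAt_id (𝕜 := ℝ) y).sub_const xT).const_smul t).const_add xT
      exact this.hasFDerivWithinAt
    have hinj : Set.InjOn L T := by
      intro y1 _ y2 _ h
      have : t • (y1 - xT) = t • (y2 - xT) := by
        have := congrArg (fun z => z - xT) h
        simpa [hL] using this
      have := smul_right_injective E3 (ne_of_gt ht.1) this
      simpa using congrArg (fun z => z + xT) this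
    have hcov := integral_image_eq_integral_abs_det_fderiv_smul volume hTm hDL hinj (Pfun Fp)
    have hdet : (t • ContinuousLinearMap.id ℝ E3).det = t ^ 3 := by
      rw [ContinuousLinearMap.det]
      have : ((t • ContinuousLinearMap.id ℝ E3 : E3 →L[ℝ] E3) : E3 →ₗ[ℝ] E3)
          = t • LinearMap.id := by
        ext v; simp
      rw [this, LinearMap.det_smul]
      simp [finrank_euclideanSpace_fin]
    have himage : ∫ x in L '' T, Pfun Fp x = t ^ 3 * φ t := by
      rw [hcov]
      simp only [hdet]
      rw [abs_of_nonneg (pow_nonneg ht.1.le 3), integral_smul]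
      simp [hφ, hL, smul_eq_mul]
    have hsub : L '' T ⊆ T := by
      rintro - ⟨y, hy, rfl⟩
      have h := hstar hy (by linarith [ht.2] : (0:ℝ) ≤ 1 - t) (le_of_lt ht.1) (by ring)
      have : xT + t • (y - xT) = (1 - t) • xT + t • y := by
        rw [smul_sub, sub_smul]; module
      rw [hL]; simp only []
      rw [this]; exact h
    have hmono : ∫ x in L '' T, Pfun Fp x ≤ ∫ x in T, Pfun Fp x :=
      setIntegral_mono_set hint (Filter.Eventually.of_forall fun x => hnn x)
        (HasSubset.Subset.eventuallyLE hsub)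
    rw [← himage, hφ1.symm] at *
    linarith [hmono]
  -- step (b) : derivative of φ at 1
  have hderφ : HasDerivAt φ (∫ x in T, Pder Fp x (x - xT)) 1 := by
    obtain ⟨R, hRsub, hR0⟩ : ∃ R : ℝ, T ⊆ Metric.closedBall xT R ∧ 0 ≤ R := by
      obtain ⟨R, hR⟩ := hbdd.subset_closedBall xT
      exact ⟨max R 0, hR.trans (Metric.closedBall_subset_closedBall (le_max_left _ _)),
        le_max_right _ _⟩
    set g : ℝ × E3 → ℝ := fun q => Pder Fp (xT + q.1 • (q.2 - xT)) (q.2 - xT) with hg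
    have hgcont : Continuous g := by
      have h1 : Continuous fun q : ℝ × E3 => xT + q.1 • (q.2 - xT) := by fun_prop
      have h2 : g = fun q : ℝ × E3 =>
          ∑ j : Fin 3, Pfun (pderiv j Fp) (xT + q.1 • (q.2 - xT)) * (q.2 - xT) j := by
        funext q; rw [hg]; simp only [Pder_apply]
      rw [h2]
      refine continuous_finset_sum _ fun j _ => ?_
      refine ((continuous_Pfun (pderiv j Fp)).comp h1).mul ?_
      have h3 : Continuous fun q : ℝ × E3 => q.2 - xT := by fun_prop
      exact (ContinuousLinearMap.continuous (EuclideanSpace.proj (𝕜 := ℝ) j)).comp h3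
    have hK : IsCompact (Set.Icc (-2:ℝ) 2 ×ˢ Metric.closedBall xT R) :=
      isCompact_Icc.prod (isCompact_closedBall _ _)
    obtain ⟨M, hM⟩ : ∃ M, ∀ q ∈ Set.Icc (-2:ℝ) 2 ×ˢ Metric.closedBall xT R, ‖g q‖ ≤ M :=
      hK.exists_bound_of_continuousOn hgcont.continuousOn
    have key := hasDerivAt_integral_of_dominated_loc_of_deriv_le
      (μ := volume.restrict T) (𝕜 := ℝ)
      (F := fun t x => Pfun Fp (xT + t • (x - xT)))
      (F' := fun t x => Pder Fp (xT + t • (x - xT)) (x - xT))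
      (x₀ := (1:ℝ)) (bound := fun _ => M) (s := Metric.ball 1 1) (Metric.ball_mem_nhds _ one_pos)
      (Filter.Eventually.of_forall fun t =>
        (((continuous_Pfun Fp).comp (by fun_prop : Continuous fun x : E3 => xT + t • (x - xT)))).aestronglyMeasurable)
      ((integrable_congr (Filter.Eventually.of_forall (fun x : E3 =>
          (by simp : (fun x : E3 => Pfun Fp (xT + (1:ℝ) • (x - xT))) x = Pfun Fp x)))).2 hint)
      (by
        have hc : Continuous fun x : E3 => g (1, x) :=
          hgcont.comp (continuous_const.prodMk continuous_id)
        exact hc.aestronglyMeasurable)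
      (by
        refine (ae_restrict_iff' hTm).2 (Filter.Eventually.of_forall fun x hx => ?_)
        intro t ht
        refine hM (t, x) ?_
        constructor
        · have := Metric.mem_ball.1 ht
          have h4 : |t - 1| < 1 := by simpa [Real.dist_eq] using this
          have h5 := abs_lt.1 h4
          exact ⟨by linarith [h5.1], by linarith [h5.2]⟩
        · exact hRsub hx)
      (by
        rw [integrable_const_iff]
        right
        refine ⟨?_⟩
        simp only [Measure.restrict_apply_univ]
        exact measure_T_lt_top hbdd)
      (Filter.Eventually.of_forall fun x => fun t _ => hasDerivAt_Pfun_line Fp xT (x - xT) t)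
    have h6 := key.2
    have h7 : (fun x : E3 => Pder Fp (xT + (1:ℝ) • (x - xT)) (x - xT))
        = fun x : E3 => Pder Fp x (x - xT) := by
      funext x; simp
    rw [h7] at h6
    exact h6
  -- step (c) : conclude
  have hh : HasDerivAt (fun t : ℝ => t ^ 3 * φ t)
      (3 * φ 1 + ∫ x in T, Pder Fp x (x - xT)) 1 := by
    have h0 := (hasDerivAt_pow 3 (1:ℝ)).mul hderφ
    refine h0.congr_deriv ?_
    push_cast
    norm_num
  have hnonneg : 0 ≤ 3 * φ 1 + ∫ x in T, Pder Fp x (x - xT) := by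
    refine deriv_nonneg_of_le_one hh fun t ht => ?_
    have := hstep1 t ht
    simpa using this
  rw [hφ1] at hnonneg
  linarith

/-- If `T ⊂ ℝ³` is a bounded open set of diameter `h_T`, star-shaped with
respect to an interior point `x_T`, `c` is a vector-valued polynomial, and
`p := (x − x_T) × curl c`, then `‖curl c‖_{L²(T)} ≤ 2 ‖curl p‖_{L²(T)}`. -/
theorem curl_L2_bound_star_shaped (T : Set E3) (hT : ℝ) (xT : E3)
    (hopen : IsOpen T) (hbdd : Bornology.IsBounded T) (hdiam : Metric.diam T = hT)
    (hmem : xT ∈ T) (hstar : StarConvex ℝ xT T)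
    (c : E3 → E3) (q : ℕ) (hc : PolyV q c)
    (p : E3 → E3) (hp : ∀ x, p x = cross3 (x - xT) (vcurl c x)) :
    Real.sqrt (∫ x in T, ‖vcurl c x‖ ^ 2) ≤ 2 * Real.sqrt (∫ x in T, ‖vcurl p x‖ ^ 2) := by
  classical
  have hTm : MeasurableSet T := hopen.measurableSet
  choose Q hdeg hQ using hc
  -- curl c components
  set R0 : MvPolynomial (Fin 3) ℝ := pderiv 1 (Q 2) - pderiv 2 (Q 1) with hR0
  set R1 : MvPolynomial (Fin 3) ℝ := pderiv 2 (Q 0) - pderiv 0 (Q 2) with hR1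
  set R2 : MvPolynomial (Fin 3) ℝ := pderiv 0 (Q 1) - pderiv 1 (Q 0) with hR2
  have hQf : ∀ i : Fin 3, (fun y : E3 => c y i) = Pfun (Q i) := fun i => funext fun y => hQ i y
  have hw : ∀ x : E3, (vcurl c x 0 = Pfun R0 x ∧ vcurl c x 1 = Pfun R1 x)
      ∧ vcurl c x 2 = Pfun R2 x := by
    intro x
    refine ⟨⟨?_, ?_⟩, ?_⟩ <;>
      simp only [vcurl, WithLp.equiv_symm_apply, WithLp.ofLp_toLp, Matrix.cons_val_zero, Matrix.cons_val_one,
        Matrix.head_cons, Matrix.cons_val_two, Matrix.tail_cons, hQf, pd_Pfun, hR0, hR1, hR2,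
        map_sub, Pfun] <;> simp [Pfun]
  -- p components
  set A : Fin 3 → MvPolynomial (Fin 3) ℝ := fun j => X j - C (xT j) with hA
  have hAx : ∀ (j : Fin 3) (x : E3), Pfun (A j) x = x j - xT j := by
    intro j x; simp [hA, Pfun]
  set S0 : MvPolynomial (Fin 3) ℝ := A 1 * R2 - A 2 * R1 with hS0
  set S1 : MvPolynomial (Fin 3) ℝ := A 2 * R0 - A 0 * R2 with hS1
  set S2 : MvPolynomial (Fin 3) ℝ := A 0 * R1 - A 1 * R0 with hS2
  have hsubx : ∀ (x : E3) (j : Fin 3), (x - xT) j = x j - xT j := fun x j => rfl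
  have hS : ∀ x : E3, ((fun y : E3 => p y 0) = Pfun S0 ∧ (fun y : E3 => p y 1) = Pfun S1)
      ∧ (fun y : E3 => p y 2) = Pfun S2 := by
    intro x
    refine ⟨⟨?_, ?_⟩, ?_⟩ <;> funext y <;>
      rw [hp y] <;>
      simp only [cross3, WithLp.equiv_symm_apply, WithLp.ofLp_toLp, Matrix.cons_val_zero, Matrix.cons_val_one,
        Matrix.head_cons, Matrix.cons_val_two, Matrix.tail_cons, hsubx,
        (hw y).1.1, (hw y).1.2, (hw y).2, hS0, hS1, hS2, map_sub, map_mul, Pfun] <;>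
      simp [hA]
  -- curl p components
  set U0 : MvPolynomial (Fin 3) ℝ := pderiv 1 S2 - pderiv 2 S1 with hU0
  set U1 : MvPolynomial (Fin 3) ℝ := pderiv 2 S0 - pderiv 0 S2 with hU1
  set U2 : MvPolynomial (Fin 3) ℝ := pderiv 0 S1 - pderiv 1 S0 with hU2
  have hu : ∀ x : E3, (vcurl p x 0 = Pfun U0 x ∧ vcurl p x 1 = Pfun U1 x)
      ∧ vcurl p x 2 = Pfun U2 x := by
    intro x
    refine ⟨⟨?_, ?_⟩, ?_⟩ <;>
      simp only [vcurl, WithLp.equiv_symm_apply, WithLp.ofLp_toLp, Matrix.cons_val_zero, Matrix.cons_val_one,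
        Matrix.head_cons, Matrix.cons_val_two, Matrix.tail_cons,
        (hS x).1.1, (hS x).1.2, (hS x).2, pd_Pfun, hU0, hU1, hU2, map_sub, Pfun]
  -- squared norms
  set Fp : MvPolynomial (Fin 3) ℝ := R0 ^ 2 + R1 ^ 2 + R2 ^ 2 with hFp
  set Gp : MvPolynomial (Fin 3) ℝ := U0 ^ 2 + U1 ^ 2 + U2 ^ 2 with hGp
  set Hp : MvPolynomial (Fin 3) ℝ := R0 * U0 + R1 * U1 + R2 * U2 with hHp
  have hnorm3 : ∀ v : E3, ‖v‖ ^ 2 = (v 0) ^ 2 + (v 1) ^ 2 + (v 2) ^ 2 := by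
    intro v
    rw [EuclideanSpace.norm_eq, Real.sq_sqrt (by positivity)]
    simp [Fin.sum_univ_three, sq_abs]
  have hnormc : ∀ x : E3, ‖vcurl c x‖ ^ 2 = Pfun Fp x := by
    intro x
    rw [hnorm3, (hw x).1.1, (hw x).1.2, (hw x).2, hFp]
    simp [Pfun]
  have hnormp : ∀ x : E3, ‖vcurl p x‖ ^ 2 = Pfun Gp x := by
    intro x
    rw [hnorm3, (hu x).1.1, (hu x).1.2, (hu x).2, hGp]
    simp [Pfun]
  have hFnn : ∀ x : E3, 0 ≤ Pfun Fp x := fun x => by rw [← hnormc x]; positivity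
  -- the key pointwise identity
  have hkey : ∀ x : E3, Pfun Hp x = -2 * Pfun Fp x - (1/2) * Pder Fp x (x - xT) := by
    intro x
    have hdA : ∀ i j : Fin 3, pderiv j (A i) = if i = j then 1 else 0 := by
      intro i j
      simp [hA, Pi.single_apply]
    have hFd : ∀ j : Fin 3, Pfun (pderiv j Fp) x
        = 2 * Pfun R0 x * Pfun (pderiv j R0) x + 2 * Pfun R1 x * Pfun (pderiv j R1) x
          + 2 * Pfun R2 x * Pfun (pderiv j R2) x := by
      intro j
      simp only [hFp, map_add, pderiv_pow]
      simp only [Pfun, map_add, map_mul, map_pow, map_natCast]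
      push_cast
      ring
    have hdivP : pderiv 0 R0 + pderiv 1 R1 + pderiv 2 R2 = 0 := by
      simp only [hR0, hR1, hR2, map_sub]
      rw [pderiv_comm' 1 0 (Q 2), pderiv_comm' 2 0 (Q 1), pderiv_comm' 2 1 (Q 0)]
      ring
    have hdiv : Pfun (pderiv 0 R0) x + Pfun (pderiv 1 R1) x + Pfun (pderiv 2 R2) x = 0 := by
      have := congrArg (fun P => Pfun P x) hdivP
      simpa [Pfun] using this
    have hU0x : Pfun U0 x = Pfun (A 0) x * (Pfun (pderiv 1 R1) x + Pfun (pderiv 2 R2) x)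
        - 2 * Pfun R0 x - Pfun (A 1) x * Pfun (pderiv 1 R0) x
        - Pfun (A 2) x * Pfun (pderiv 2 R0) x := by
      simp only [hU0, hS1, hS2, map_sub, pderiv_mul, hdA]
      simp only [Pfun, map_sub, map_add, map_mul, map_one, map_zero, Fin.reduceEq, reduceIte,
        if_true, if_false]
      ring
    have hU1x : Pfun U1 x = Pfun (A 1) x * (Pfun (pderiv 2 R2) x + Pfun (pderiv 0 R0) x)
        - 2 * Pfun R1 x - Pfun (A 2) x * Pfun (pderiv 2 R1) x
        - Pfun (A 0) x * Pfun (pderiv 0 R1) x := by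
      simp only [hU1, hS2, hS0, map_sub, pderiv_mul, hdA]
      simp only [Pfun, map_sub, map_add, map_mul, map_one, map_zero, Fin.reduceEq, reduceIte,
        if_true, if_false]
      ring
    have hU2x : Pfun U2 x = Pfun (A 2) x * (Pfun (pderiv 0 R0) x + Pfun (pderiv 1 R1) x)
        - 2 * Pfun R2 x - Pfun (A 0) x * Pfun (pderiv 0 R2) x
        - Pfun (A 1) x * Pfun (pderiv 1 R2) x := by
      simp only [hU2, hS0, hS1, map_sub, pderiv_mul, hdA]
      simp only [Pfun, map_sub, map_add, map_mul, map_one, map_zero, Fin.reduceEq, reduceIte,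
        if_true, if_false]
      ring
    have hHx : Pfun Hp x = Pfun R0 x * Pfun U0 x + Pfun R1 x * Pfun U1 x
        + Pfun R2 x * Pfun U2 x := by
      simp [hHp, Pfun]
    have hFx : Pfun Fp x = Pfun R0 x ^ 2 + Pfun R1 x ^ 2 + Pfun R2 x ^ 2 := by
      simp [hFp, Pfun]
    rw [Pder_apply]
    rw [Fin.sum_univ_three]
    rw [hsubx, hsubx, hsubx, hFd 0, hFd 1, hFd 2, hHx, hU0x, hU1x, hU2x, hFx,
      hAx 0 x, hAx 1 x, hAx 2 x]
    linear_combination ((x 0 - xT 0) * Pfun R0 x + (x 1 - xT 1) * Pfun R1 x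
      + (x 2 - xT 2) * Pfun R2 x) * hdiv
  -- integrability
  have hintF : IntegrableOn (Pfun Fp) T volume :=
    integrableOn_of_continuous (continuous_Pfun Fp) hbdd
  have hintG : IntegrableOn (Pfun Gp) T volume :=
    integrableOn_of_continuous (continuous_Pfun Gp) hbdd
  have hintH : IntegrableOn (Pfun Hp) T volume :=
    integrableOn_of_continuous (continuous_Pfun Hp) hbdd
  have hcontD : Continuous fun x : E3 => Pder Fp x (x - xT) := by
    have h2 : (fun x : E3 => Pder Fp x (x - xT)) = fun x : E3 =>
        ∑ j : Fin 3, Pfun (pderiv j Fp) x * (x j - xT j) := by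
      funext x; rw [Pder_apply]; exact Finset.sum_congr rfl fun j _ => by rw [hsubx]
    rw [h2]
    refine continuous_finset_sum _ fun j _ => (continuous_Pfun _).mul ?_
    exact ((ContinuousLinearMap.continuous (EuclideanSpace.proj (𝕜 := ℝ) j))).sub continuous_const
  have hintD : IntegrableOn (fun x : E3 => Pder Fp x (x - xT)) T volume :=
    integrableOn_of_continuous hcontD hbdd
  -- the three integral facts
  have hE1 : ∫ x in T, Pfun Hp x
      = -2 * (∫ x in T, Pfun Fp x) - (1/2) * ∫ x in T, Pder Fp x (x - xT) := by
    rw [integral_congr_ae (Filter.Eventually.of_forall fun x => hkey x)]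
    rw [integral_sub ((hintF.const_mul _)) ((hintD.const_mul _)),
      integral_const_mul, integral_const_mul]
  have hE2 : -3 * ∫ x in T, Pfun Fp x ≤ ∫ x in T, Pder Fp x (x - xT) :=
    dilation_ineq T hopen hbdd xT hstar Fp hFnn
  have hptw : ∀ x : E3, -Pfun Hp x ≤ (1/4) * Pfun Fp x + Pfun Gp x := by
    intro x
    have habs : ∀ r u : ℝ, -(r * u) ≤ (1/4) * r ^ 2 + u ^ 2 := fun r u => by
      nlinarith [sq_nonneg (r / 2 + u)]
    have e0 := habs (Pfun R0 x) (Pfun U0 x)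
    have e1 := habs (Pfun R1 x) (Pfun U1 x)
    have e2 := habs (Pfun R2 x) (Pfun U2 x)
    simp only [hHp, hFp, hGp, Pfun, map_add, map_mul, map_pow] at e0 e1 e2 ⊢
    linarith
  have hE3 : -∫ x in T, Pfun Hp x ≤ (1/4) * (∫ x in T, Pfun Fp x) + ∫ x in T, Pfun Gp x := by
    rw [← integral_neg, ← integral_const_mul, ← integral_add ((hintF.const_mul _)) hintG]
    exact integral_mono hintH.neg ((hintF.const_mul _).add hintG) hptw
  -- combine
  set I1 := ∫ x in T, Pfun Fp x with hI1
  set I2 := ∫ x in T, Pfun Gp x with hI2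
  have hI2nn : 0 ≤ I2 := by
    rw [hI2]
    exact setIntegral_nonneg hTm fun x _ => by rw [← hnormp x]; positivity
  have hmain : I1 ≤ 4 * I2 := by
    have h1 : -(∫ x in T, Pfun Hp x) ≥ (1/2) * I1 := by
      rw [hE1]; linarith [hE2]
    linarith [hE3]
  have hc2 : ∫ x in T, ‖vcurl c x‖ ^ 2 = I1 :=
    integral_congr_ae (Filter.Eventually.of_forall fun x => hnormc x)
  have hp2 : ∫ x in T, ‖vcurl p x‖ ^ 2 = I2 :=
    integral_congr_ae (Filter.Eventually.of_forall fun x => hnormp x)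
  rw [hc2, hp2]
  have h4 : Real.sqrt (4 * I2) = 2 * Real.sqrt I2 := by
    rw [show (4:ℝ) = 2 ^ 2 by norm_num, Real.sqrt_mul (by positivity), Real.sqrt_sq (by norm_num)]
  calc Real.sqrt I1 ≤ Real.sqrt (4 * I2) := Real.sqrt_le_sqrt hmain
    _ = 2 * Real.sqrt I2 := h4
end
end

section
/- Let V be a finite-dimensional real inner product space and A : V × V → ℝ a bilinear form of the block skew-symmetric saddle-point type A((w,r),(v,q)) = a(w,v) + b(v,r) − b(w,q) + c(r,q) with a, c symmetric positive semi-definite. If for all z = (w,r), A(z,z) = ‖w‖_a² + ‖r‖_c² where ‖·‖_a = a(·,·)^{1/2}, ‖·‖_c = c(·,·)^{1/2}, and ‖(w,r)‖² := ‖w‖_a² + ‖r‖_c² is a norm on the subspace Z° := {(w,r) : −b(w,q) + c(r,q) = 0 ∀q}, then the problem A((u,p),(v,q)) = L(v) for all (v,q) (L linear) has a unique solution, and ‖(u,p)‖ ≤ sup_{‖w‖_a ≤ 1} L(w). -/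
noncomputable section

/-- Abstract well-posedness of the saddle-point problem
`A((w,r),(v,q)) = a(w,v) + b(v,r) − b(w,q) + c(r,q)` on finite-dimensional real inner
product spaces, with `a`, `c` symmetric positive semi-definite, under the assumption that
`((w,r) ↦ a(w,w) + c(r,r))^{1/2}` is a norm on
`Z° := {(w,r) : −b(w,q) + c(r,q) = 0 ∀q}`: the problem `A((u,p),(v,q)) = L(v)` has a
unique solution, which satisfies `(a(u,u)+c(p,p))^{1/2} ≤ sup_{a(w,w) ≤ 1} L(w)`. -/
theorem saddle_point_wellposedness
    (X Y : Type*) [NormedAddCommGroup X] [InnerProductSpace ℝ X] [FiniteDimensional ℝ X]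
    [NormedAddCommGroup Y] [InnerProductSpace ℝ Y] [FiniteDimensional ℝ Y]
    (a : X →ₗ[ℝ] X →ₗ[ℝ] ℝ) (b : X →ₗ[ℝ] Y →ₗ[ℝ] ℝ) (c : Y →ₗ[ℝ] Y →ₗ[ℝ] ℝ)
    (ha_symm : ∀ w v, a w v = a v w) (ha_pos : ∀ w, 0 ≤ a w w)
    (hc_symm : ∀ r q, c r q = c q r) (hc_pos : ∀ r, 0 ≤ c r r)
    (A : X × Y → X × Y → ℝ)
    (hA : ∀ (w v : X) (r q : Y), A (w, r) (v, q) = a w v + b v r - b w q + c r q)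
    (hcoer : ∀ z : X × Y, A z z = a z.1 z.1 + c z.2 z.2)
    (hnorm : ∀ (w : X) (r : Y), (∀ q : Y, -(b w q) + c r q = 0) →
      a w w + c r r = 0 → w = 0 ∧ r = 0)
    (L : X →ₗ[ℝ] ℝ) :
    ∃ up : X × Y,
      (∀ vq : X × Y, A up vq = L vq.1) ∧
      (∀ up' : X × Y, (∀ vq : X × Y, A up' vq = L vq.1) → up' = up) ∧
      ∀ M : ℝ, (∀ w : X, a w w ≤ 1 → L w ≤ M) →
        Real.sqrt (a up.1 up.1 + c up.2 up.2) ≤ M := by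
  classical
  -- Build the bilinear form as a linear map into the dual
  set T : (X × Y) →ₗ[ℝ] Module.Dual ℝ (X × Y) :=
    LinearMap.mk₂ ℝ (fun z v => a z.1 v.1 + b v.1 z.2 - b z.1 v.2 + c z.2 v.2)
      (by intro z z' v; simp [Prod.fst_add, Prod.snd_add]; ring)
      (by intro s z v; simp [smul_eq_mul]; ring)
      (by intro z v v'; simp; ring)
      (by intro s z v; simp [smul_eq_mul]; ring) with hT
  have hTA : ∀ z v : X × Y, T z v = A z v := by
    rintro ⟨w, r⟩ ⟨v, q⟩
    rw [hA]
    simp [hT, LinearMap.mk₂_apply]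
  -- injectivity of T
  have hinj : Function.Injective T := by
    rw [← LinearMap.ker_eq_bot]
    rw [LinearMap.ker_eq_bot']
    rintro ⟨w, r⟩ hm
    have hall : ∀ v : X × Y, T (w, r) v = 0 := fun v => by rw [hm]; rfl
    have hZ : ∀ q : Y, -(b w q) + c r q = 0 := by
      intro q
      have := hall (0, q)
      simpa [hT, LinearMap.mk₂_apply] using this
    have hz : a w w + c r r = 0 := by
      have := hall (w, r)
      rw [hTA, hcoer] at this
      simpa using this
    obtain ⟨hw, hr⟩ := hnorm w r hZ hz
    simp [hw, hr]
  have hsurj : Function.Surjective T := by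
    have hfr : Module.finrank ℝ (X × Y) = Module.finrank ℝ (Module.Dual ℝ (X × Y)) :=
      (Subspace.dual_finrank_eq).symm
    exact (LinearMap.injective_iff_surjective_of_finrank_eq_finrank hfr).mp hinj
  -- target functional
  set Lext : Module.Dual ℝ (X × Y) := L.comp (LinearMap.fst ℝ X Y) with hLext
  obtain ⟨up, hup⟩ := hsurj Lext
  have hsol : ∀ vq : X × Y, A up vq = L vq.1 := by
    intro vq
    rw [← hTA, hup]
    rfl
  refine ⟨up, hsol, ?_, ?_⟩
  · intro up' hup'
    apply hinj
    apply LinearMap.ext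
    intro v
    rw [hTA up' v, hTA up v, hup' v, hsol v]
  · intro M hM
    have hM0 : 0 ≤ M := by
      have := hM 0 (by simp)
      simpa using this
    set u := up.1
    set p := up.2
    set s := a u u + c p p with hs
    have hs0 : 0 ≤ s := add_nonneg (ha_pos u) (hc_pos p)
    have hsL : s = L u := by
      have := hsol up
      rw [← this, hcoer]
    -- L u ≤ M * sqrt (a u u)
    have key : L u ≤ M * Real.sqrt (a u u) := by
      rcases eq_or_lt_of_le (ha_pos u) with h0 | hpos
      · -- a u u = 0 : show L u ≤ 0
        have hL0 : L u ≤ 0 := by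
          by_contra hlt
          push_neg at hlt
          -- pick t large
          obtain ⟨t, ht⟩ := exists_nat_gt (M / L u)
          have htu : a ((t : ℝ) • u) ((t : ℝ) • u) ≤ 1 := by
            simp [smul_eq_mul, ← h0]
          have := hM ((t : ℝ) • u) htu
          rw [map_smul, smul_eq_mul] at this
          have ht' : M / L u < (t : ℝ) := ht
          have : M < (t : ℝ) * L u := by
            rwa [div_lt_iff₀ hlt] at ht'
          linarith [hM ((t : ℝ) • u) htu, map_smul L (t : ℝ) u]
        calc L u ≤ 0 := hL0
          _ ≤ M * Real.sqrt (a u u) := mul_nonneg hM0 (Real.sqrt_nonneg _)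
      · -- a u u > 0
        set α := Real.sqrt (a u u) with hα
        have hα0 : 0 < α := Real.sqrt_pos.mpr hpos
        have hαsq : α * α = a u u := Real.mul_self_sqrt (le_of_lt hpos)
        have hw1 : a (α⁻¹ • u) (α⁻¹ • u) ≤ 1 := by
          have he : a (α⁻¹ • u) (α⁻¹ • u) = α⁻¹ * (α⁻¹ * a u u) := by
            simp [smul_eq_mul]
          rw [he, ← hαsq]
          field_simp
          exact le_rfl
        have := hM (α⁻¹ • u) hw1
        rw [map_smul, smul_eq_mul] at this
        have : L u ≤ M * α := by
          rw [inv_mul_le_iff₀ hα0] at this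
          linarith [this]
        exact this
    have haus : a u u ≤ s := le_add_of_nonneg_right (hc_pos p)
    have hsqmono : Real.sqrt (a u u) ≤ Real.sqrt s := Real.sqrt_le_sqrt haus
    have hkey2 : s ≤ M * Real.sqrt s := by
      calc s = L u := hsL
        _ ≤ M * Real.sqrt (a u u) := key
        _ ≤ M * Real.sqrt s := by
            exact mul_le_mul_of_nonneg_left hsqmono hM0
    rcases eq_or_lt_of_le hs0 with h0 | hpos
    · rw [← h0]
      simpa using hM0
    · have hsq : 0 < Real.sqrt s := Real.sqrt_pos.mpr hpos
      have h2 : Real.sqrt s * Real.sqrt s = s := Real.mul_self_sqrt hs0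
      exact le_of_mul_le_mul_right (by rw [h2]; exact hkey2) hsq
end
end
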